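/- Let B be a Banach lattice and u : B₊ → ℝ quasi-concave. Let (T, μ) be a finite measure space, S ⊆ T with μ(S) > 0, and g : S → B₊ Bochner integrable such that u(g(t)) > α for μ-a.e. t ∈ S. Then the average ḡ = (1/μ(S))∫_S g dμ satisfies u(ḡ) ≥ α; if moreover u is continuous and strongly monotone and the inequality u(g(t)) > α holds on a set of positive measure with values bounded away, one obtains u(ḡ + η) > α for every η ∈ B₊ ∖ {0}. -/

import Mathlib

open MeasureTheory

private lemma smul_nonneg_lattice {B : Type*} [NormedAddCommGroup B] [Lattice B] [HasSolidNorm B]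
    [IsOrderedAddMonoid B] [NormedSpace ℝ B] {a : ℝ} {x : B} (ha : 0 ≤ a) (hx : 0 ≤ x) : 0 ≤ a • x := by
  have hnat : ∀ k : ℕ, (0:B) ≤ (k : ℝ) • x := fun k => by
    rw [Nat.cast_smul_eq_nsmul]; exact nsmul_nonneg hx k
  have hdy : ∀ n k : ℕ, (0:B) ≤ ((k : ℝ) / 2 ^ n) • x := by
    intro n
    induction n with
    | zero => intro k; simpa using hnat k
    | succ n ih =>
      intro k
      apply nsmul_two_semiclosed
      have h2 : (2:ℕ) • (((k:ℝ) / 2 ^ (n+1)) • x) = ((k:ℝ) / 2 ^ n) • x := by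
        rw [two_nsmul, ← add_smul]
        congr 1
        ring
      rw [h2]
      exact ih k
  have hpow : ∀ n : ℕ, (0:ℝ) < 2 ^ n := fun n => by positivity
  have hub : ∀ n : ℕ, ((⌊a * 2 ^ n⌋₊ : ℝ) / 2 ^ n) ≤ a := by
    intro n
    rw [div_le_iff₀ (hpow n)]
    exact Nat.floor_le (by positivity)
  have hlb : ∀ n : ℕ, a - (2 ^ n)⁻¹ ≤ ((⌊a * 2 ^ n⌋₊ : ℝ) / 2 ^ n) := by
    intro n
    rw [le_div_iff₀ (hpow n)]
    have h1 : a * 2 ^ n < (⌊a * 2 ^ n⌋₊ : ℝ) + 1 := Nat.lt_floor_add_one _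
    have h2 : (2 ^ n : ℝ)⁻¹ * 2 ^ n = 1 := inv_mul_cancel₀ (hpow n).ne'
    nlinarith
  have hlbt : Filter.Tendsto (fun n : ℕ => a - (2 ^ n)⁻¹) Filter.atTop (nhds a) := by
    have : Filter.Tendsto (fun n : ℕ => ((2:ℝ) ^ n)⁻¹) Filter.atTop (nhds 0) :=
      Filter.Tendsto.comp tendsto_inv_atTop_zero
        (tendsto_pow_atTop_atTop_of_one_lt one_lt_two)
    simpa using (tendsto_const_nhds (x := a)).sub this
  have hseq : Filter.Tendsto (fun n : ℕ => ((⌊a * 2 ^ n⌋₊ : ℝ) / 2 ^ n))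
      Filter.atTop (nhds a) :=
    tendsto_of_tendsto_of_tendsto_of_le_of_le hlbt tendsto_const_nhds hlb hub
  have hsm : Filter.Tendsto (fun n : ℕ => ((⌊a * 2 ^ n⌋₊ : ℝ) / 2 ^ n) • x)
      Filter.atTop (nhds (a • x)) := hseq.smul_const x
  have hcl : IsClosed {y : B | (0:B) ≤ y} := isClosed_le continuous_const continuous_id
  exact hcl.mem_of_tendsto hsm (Filter.Eventually.of_forall fun n => hdy n _)

/-- Jensen-type property for continuous quasi-concave utilities:
if `u(g(t)) > α` a.e. on `S`, the Bochner average `ḡ` of `g` over `S` satisfies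
`u(ḡ) ≥ α`; with continuity and strong monotonicity, adding any nonzero positive
vector gives the strict inequality `u(ḡ + η) > α`. -/
theorem stmt_17 {B : Type*} [NormedAddCommGroup B] [Lattice B] [HasSolidNorm B]
    [IsOrderedAddMonoid B] [NormedSpace ℝ B]
    [CompleteSpace B]
    (u : B → ℝ) (hcont : Continuous u)
    (hqc : ∀ ξ ζ : B, ∀ l : ℝ, l ∈ Set.Icc (0:ℝ) 1 →
      min (u ξ) (u ζ) ≤ u (l • ξ + (1 - l) • ζ))
    (hmono : ∀ ξ ζ : B, 0 ≤ ζ → ζ ≤ ξ → ζ ≠ ξ → u ζ < u ξ)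
    {Ω : Type*} [MeasurableSpace Ω] (μ : Measure Ω) [IsFiniteMeasure μ]
    (S : Set Ω) (hSm : MeasurableSet S) (hSpos : 0 < μ S)
    (g : Ω → B) (hg : IntegrableOn g S μ)
    (hgpos : ∀ᵐ t ∂μ.restrict S, 0 ≤ g t)
    (α : ℝ) (hgα : ∀ᵐ t ∂μ.restrict S, α < u (g t)) :
    α ≤ u ((μ S).toReal⁻¹ • ∫ t in S, g t ∂μ) ∧
      ∀ η : B, 0 ≤ η → η ≠ 0 →
        α < u ((μ S).toReal⁻¹ • ∫ t in S, g t ∂μ + η) := by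
  have h0 : μ S ≠ 0 := hSpos.ne'
  have hT : μ S ≠ ⊤ := measure_ne_top μ S
  -- the closed convex upper level set
  have hconv : Convex ℝ {x : B | α ≤ u x} := by
    intro x hx y hy a b ha hb hab
    have := hqc x y a ⟨ha, by linarith⟩
    have hb' : b = 1 - a := by linarith
    subst hb'
    exact le_trans (le_min hx hy) this
  have hclosed : IsClosed {x : B | α ≤ u x} := isClosed_le continuous_const hcont
  have hmem : (⨍ t in S, g t ∂μ) ∈ {x : B | α ≤ u x} :=
    hconv.set_average_mem hclosed h0 hT (hgα.mono fun t ht => le_of_lt ht) hg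
  -- positivity of the average
  have hposconv : Convex ℝ {x : B | (0:B) ≤ x} := by
    intro x hx y hy a b ha hb hab
    exact add_nonneg (smul_nonneg_lattice ha hx) (smul_nonneg_lattice hb hy)
  have hposclosed : IsClosed {x : B | (0:B) ≤ x} := isClosed_le continuous_const continuous_id
  have hmempos : (⨍ t in S, g t ∂μ) ∈ {x : B | (0:B) ≤ x} :=
    hposconv.set_average_mem hposclosed h0 hT hgpos hg
  rw [setAverage_eq] at hmem hmempos
  refine ⟨hmem, fun η hη hη0 => ?_⟩
  set v := (μ S).toReal⁻¹ • ∫ t in S, g t ∂μ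
  have hlt : u v < u (v + η) := by
    refine hmono (v + η) v hmempos (le_add_of_nonneg_right hη) ?_
    intro h
    apply hη0
    have := congrArg (· - v) h
    simpa using this.symm
  exact lt_of_le_of_lt hmem hlt
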